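/- Let X be a nonempty set, F(X) the free group on X, and let Q ⊆ F(X) be the set of all conjugates w⁻¹xw of generators x ∈ X by elements w ∈ F(X), equipped with the conjugation operation q*r = r⁻¹qr (so Q is a subquandle of Conj(F(X)), and it realizes the free quandle on X). Then Q admits a right order, and Q is semi-latin at every point: for every q̂ ∈ Q, the map Q → Q, r ↦ r⁻¹q̂r, is injective. -/

import Mathlib

namespace MagnusAux

variable {X : Type*}

/-- Convolution product of noncommutative power series indexed by words. -/
def conv (f g : List X → ℤ) (w : List X) : ℤ :=
  ∑ i ∈ Finset.range (w.length + 1), f (w.take i) * g (w.drop i)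

/-- The constant series 1. -/
def oneF : List X → ℤ := fun w => match w with | [] => 1 | _ => 0

@[simp] theorem oneF_nil : (oneF : List X → ℤ) [] = 1 := rfl

theorem oneF_ne {w : List X} (h : w ≠ []) : oneF w = 0 := by
  cases w with
  | nil => exact absurd rfl h
  | cons a t => rfl

theorem conv_one_left (f : List X → ℤ) : conv oneF f = f := by
  funext w
  rw [conv, Finset.sum_eq_single 0]
  · simp
  · intro i hi hne
    have : w.take i ≠ [] := by
      intro h
      rcases Nat.exists_eq_succ_of_ne_zero hne with ⟨j, rfl⟩
      rcases w with _ | ⟨a, t⟩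
      · simp at hi
      · simp [List.take_succ_cons] at h
    rw [oneF_ne this, zero_mul]
  · intro h; simp at h

theorem conv_one_right (f : List X → ℤ) : conv f oneF = f := by
  funext w
  rw [conv, Finset.sum_eq_single w.length]
  · simp
  · intro i hi hne
    have hi' : i < w.length := by
      have := Finset.mem_range.mp hi; omega
    have : w.drop i ≠ [] := by
      intro h
      have := (List.length_drop (i := i) (l := w)) ▸ congrArg List.length h
      simp at this; omega
    rw [oneF_ne this, mul_zero]
  · intro h; simp at h

theorem conv_assoc (f g h : List X → ℤ) : conv (conv f g) h = conv f (conv g h) := by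
  funext w
  set n := w.length with hn
  have L1 : conv (conv f g) h w =
      ∑ j ∈ Finset.range (n + 1), ∑ i ∈ Finset.range (j + 1),
        f (w.take i) * g ((w.take j).drop i) * h (w.drop j) := by
    rw [conv]
    refine Finset.sum_congr rfl fun j hj => ?_
    have hj' : j ≤ n := by have := Finset.mem_range.mp hj; omega
    rw [conv, Finset.sum_mul]
    have hlen : (w.take j).length = j := by
      rw [List.length_take]; omega
    rw [hlen]
    refine Finset.sum_congr rfl fun i hi => ?_
    have hi' : i ≤ j := by have := Finset.mem_range.mp hi; omega
    rw [List.take_take, min_eq_left hi']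
  have L2 : conv f (conv g h) w =
      ∑ i ∈ Finset.range (n + 1), ∑ k ∈ Finset.range (n - i + 1),
        f (w.take i) * (g ((w.drop i).take k) * h ((w.drop i).drop k)) := by
    rw [conv]
    refine Finset.sum_congr rfl fun i hi => ?_
    rw [conv, Finset.mul_sum]
    have hlen : (w.drop i).length = n - i := by rw [List.length_drop]
    rw [hlen]
  rw [L1, L2]
  have e1 : (∑ j ∈ Finset.range (n + 1), ∑ i ∈ Finset.range (j + 1),
        f (w.take i) * g ((w.take j).drop i) * h (w.drop j))
      = ∑ j ∈ Finset.Ico 0 (n + 1), ∑ i ∈ Finset.Ico 0 (j + 1),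
        f (w.take i) * g ((w.take j).drop i) * h (w.drop j) := by
    refine Finset.sum_congr (by simp) fun j _ => Finset.sum_congr (by simp) fun i _ => rfl
  rw [e1, ← Finset.sum_Ico_Ico_comm 0 (n+1)
    (fun i j => f (w.take i) * g ((w.take j).drop i) * h (w.drop j))]
  refine Finset.sum_congr (by simp) fun i hi => ?_
  have hi' : i ≤ n := by
    have := Finset.mem_range.mp hi; omega
  rw [Finset.sum_Ico_eq_sum_range]
  have hrw : n + 1 - i = n - i + 1 := by omega
  rw [hrw]
  refine Finset.sum_congr rfl fun k hk => ?_
  have hk' : k ≤ n - i := by have := Finset.mem_range.mp hk; omega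
  rw [List.drop_take, List.drop_drop, mul_assoc]
  have h1 : i + k - i = k := by omega
  rw [h1]

end MagnusAux
namespace MagnusAux

variable {X : Type*}

/-- The group of power series with constant term 1. -/
def Mag (X : Type*) := {f : List X → ℤ // f [] = 1}

instance : Mul (Mag X) :=
  ⟨fun f g => ⟨conv f.1 g.1, by simp [conv, f.2, g.2]⟩⟩

instance : One (Mag X) := ⟨⟨oneF, rfl⟩⟩

theorem mag_mul_val (f g : Mag X) : (f * g).1 = conv f.1 g.1 := rfl
theorem mag_one_val : (1 : Mag X).1 = oneF := rfl

/-- Right inverse of a power series with constant term 1, defined recursively. -/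
def rinv (f : List X → ℤ) : List X → ℤ
  | [] => 1
  | a :: l => -∑ i ∈ Finset.range (l.length + 1),
      f (List.take (i+1) (a :: l)) * rinv f (List.drop i l)
termination_by w => w.length
decreasing_by
  simp only [List.length_drop, List.length_cons]
  omega

theorem conv_rinv (f : List X → ℤ) (hf : f [] = 1) : conv f (rinv f) = oneF := by
  funext w
  cases w with
  | nil => rw [conv]; simp [hf, rinv]
  | cons a l =>
    rw [conv, Finset.sum_range_succ']
    have h0 : (a :: l).take 0 = [] := rfl
    have h0' : (a :: l).drop 0 = a :: l := rfl
    rw [h0, h0', hf, one_mul]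
    have hlen : (a :: l).length = l.length + 1 := rfl
    rw [hlen]
    have hdrop : ∀ i, (a :: l).drop (i + 1) = l.drop i := fun i => rfl
    have : ∑ i ∈ Finset.range (l.length + 1),
        f ((a :: l).take (i + 1)) * rinv f ((a :: l).drop (i + 1))
        = ∑ i ∈ Finset.range (l.length + 1),
        f ((a :: l).take (i + 1)) * rinv f (l.drop i) := by
      refine Finset.sum_congr rfl fun i _ => by rw [hdrop]
    rw [this]
    have hr : rinv f (a :: l) = -∑ i ∈ Finset.range (l.length + 1),
        f (List.take (i+1) (a :: l)) * rinv f (List.drop i l) := by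
      rw [rinv]
    rw [hr, oneF_ne (by simp)]
    ring

instance : Inv (Mag X) :=
  ⟨fun f => ⟨rinv f.1, by rw [rinv]⟩⟩

instance magGroup : Group (Mag X) := by
  apply Group.ofRightAxioms
  · intro a b c
    apply Subtype.ext
    exact conv_assoc a.1 b.1 c.1
  · intro a
    apply Subtype.ext
    exact conv_one_right a.1
  · intro a
    apply Subtype.ext
    exact conv_rinv a.1 a.2

theorem mag_inv_val (f : Mag X) : (f⁻¹).1 = rinv f.1 := rfl

end MagnusAux
namespace MagnusAux

variable {X : Type*}

open scoped Classical

/-- The Magnus series `1 + x` of a generator. -/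
noncomputable def gen (x : X) : Mag X :=
  ⟨fun w => match w with
    | [] => 1
    | [y] => if y = x then 1 else 0
    | _ => 0, rfl⟩

theorem gen_nil (x : X) : (gen x).1 [] = 1 := rfl
theorem gen_single (x y : X) : (gen x).1 [y] = if y = x then 1 else 0 := rfl
theorem gen_long (x : X) {w : List X} (h : 2 ≤ w.length) : (gen x).1 w = 0 := by
  rcases w with _ | ⟨a, _ | ⟨b, t⟩⟩
  · simp at h
  · simp at h
  · rfl

/-- Explicit inverse of `1 + x` : the alternating geometric series. -/
noncomputable def genInvF (x : X) : List X → ℤ := fun w =>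
  if ∀ y ∈ w, y = x then (-1 : ℤ)^w.length else 0

theorem conv_gen_left (x : X) (g : List X → ℤ) (a : X) (l : List X) :
    conv (gen x).1 g (a :: l) = g (a :: l) + (if a = x then 1 else 0) * g l := by
  rw [conv, Finset.sum_range_succ']
  have h0 : (a :: l).take 0 = [] := rfl
  rw [h0, gen_nil, one_mul]
  have hlen : (a :: l).length = l.length + 1 := rfl
  rw [hlen, Finset.sum_eq_single 0]
  · have h1 : (a :: l).take 1 = [a] := rfl
    have h1' : (a :: l).drop 1 = l := rfl
    rw [h1, h1', gen_single, List.drop_zero]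
    ring
  · intro i hi hne
    have hi' := Finset.mem_range.mp hi
    have : 2 ≤ ((a :: l).take (i+1)).length := by
      rw [List.length_take]
      simp only [List.length_cons]
      omega
    rw [gen_long x this, zero_mul]
  · intro h; simp at h

theorem conv_ne_zero {f g : List X → ℤ} {w : List X} (h : conv f g w ≠ 0) :
    ∃ i ≤ w.length, f (w.take i) ≠ 0 ∧ g (w.drop i) ≠ 0 := by
  by_contra hc
  push_neg at hc
  refine h ?_
  rw [conv]
  refine Finset.sum_eq_zero fun i hi => ?_
  have hi' : i ≤ w.length := by have := Finset.mem_range.mp hi; omega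
  rcases (em (f (w.take i) = 0)) with h1 | h1
  · rw [h1, zero_mul]
  · rw [hc i hi' h1, mul_zero]

theorem gen_mul_genInv (x : X) :
    conv (gen x).1 (genInvF x) = oneF := by
  funext w
  cases w with
  | nil =>
    rw [conv]
    simp only [List.length_nil, zero_add, Finset.sum_range_one, List.take_nil, List.drop_nil]
    rw [gen_nil]
    simp [genInvF, oneF]
  | cons a l =>
    rw [conv_gen_left, oneF_ne (by simp)]
    by_cases hax : a = x
    · subst hax
      rw [if_pos rfl, one_mul]
      by_cases hall : ∀ y ∈ l, y = a
      · have h1 : genInvF a (a :: l) = (-1 : ℤ)^(l.length + 1) := by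
          rw [genInvF]
          have : ∀ y ∈ a :: l, y = a := by
            intro y hy
            rcases List.mem_cons.mp hy with rfl | hy'
            · rfl
            · exact hall y hy'
          rw [if_pos this]
          rfl
        have h2 : genInvF a l = (-1 : ℤ)^l.length := by rw [genInvF, if_pos hall]
        rw [h1, h2, pow_succ]
        ring
      · have h1 : genInvF a (a :: l) = 0 := by
          rw [genInvF, if_neg]
          intro hcon
          exact hall fun y hy => hcon y (List.mem_cons_of_mem a hy)
        have h2 : genInvF a l = 0 := by rw [genInvF, if_neg hall]
        rw [h1, h2]; ring
    · have h1 : genInvF x (a :: l) = 0 := by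
        rw [genInvF, if_neg]
        intro hcon
        exact hax (hcon a (List.mem_cons_self))
      rw [h1, if_neg hax]
      ring

theorem genInv_val (x : X) : ((gen x)⁻¹).1 = genInvF x := by
  have : gen x * ⟨genInvF x, by simp [genInvF]⟩ = 1 := by
    apply Subtype.ext
    exact gen_mul_genInv x
  have h2 := inv_eq_of_mul_eq_one_right this
  rw [h2]

end MagnusAux
namespace MagnusAux

variable {X : Type*}

theorem gen_supp {x : X} {v : List X} (h : (gen x).1 v ≠ 0) : ∀ y ∈ v, y = x := by
  rcases v with _ | ⟨a, _ | ⟨b, t⟩⟩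
  · intro y hy; simp at hy
  · intro y hy
    rcases List.mem_singleton.mp hy with rfl
    by_contra hyx
    exact h (by rw [gen_single, if_neg hyx])
  · exact absurd (gen_long x (by simp)) h

theorem genInv_supp {x : X} {v : List X} (h : ((gen x)⁻¹).1 v ≠ 0) : ∀ y ∈ v, y = x := by
  rw [genInv_val, genInvF] at h
  by_contra hc
  push_neg at hc
  rw [if_neg (by push_neg; exact hc)] at h
  exact h rfl

theorem oneF_supp {v : List X} (h : (oneF : List X → ℤ) v ≠ 0) : v = [] := by
  by_contra hc
  exact h (oneF_ne hc)

theorem genpow_supp (x : X) (k : ℕ) : ∀ {w : List X}, ((gen x ^ k).1 w ≠ 0) → ∀ y ∈ w, y = x := by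
  induction k with
  | zero =>
    intro w h y hy
    have : w = [] := oneF_supp h
    subst this; simp at hy
  | succ k ih =>
    intro w h y hy
    rw [pow_succ', mag_mul_val] at h
    obtain ⟨i, hi, h1, h2⟩ := conv_ne_zero h
    rw [← List.take_append_drop i w] at hy
    rcases List.mem_append.mp hy with hy' | hy'
    · exact gen_supp h1 y hy'
    · exact ih h2 y hy'

theorem geninvpow_supp (x : X) (k : ℕ) : ∀ {w : List X}, (((gen x)⁻¹ ^ k).1 w ≠ 0) → ∀ y ∈ w, y = x := by
  induction k with
  | zero =>
    intro w h y hy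
    have : w = [] := oneF_supp h
    subst this; simp at hy
  | succ k ih =>
    intro w h y hy
    rw [pow_succ', mag_mul_val] at h
    obtain ⟨i, hi, h1, h2⟩ := conv_ne_zero h
    rw [← List.take_append_drop i w] at hy
    rcases List.mem_append.mp hy with hy' | hy'
    · exact genInv_supp h1 y hy'
    · exact ih h2 y hy'

theorem genpow_len (x : X) (k : ℕ) : ∀ {w : List X}, k < w.length → (gen x ^ k).1 w = 0 := by
  induction k with
  | zero =>
    intro w h
    exact oneF_ne (by intro hc; subst hc; simp at h)
  | succ k ih =>
    intro w h
    rcases w with _ | ⟨a, l⟩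
    · simp at h
    · rw [pow_succ', mag_mul_val, conv_gen_left]
      have h1 : (gen x ^ k).1 (a :: l) = 0 := ih (by simp at h ⊢; omega)
      have h2 : (gen x ^ k).1 l = 0 := ih (by simp at h ⊢; omega)
      rw [h1, h2]; ring

theorem genpow_top (x : X) (k : ℕ) : (gen x ^ k).1 (List.replicate k x) = 1 := by
  induction k with
  | zero => simp [mag_one_val]
  | succ k ih =>
    rw [pow_succ', mag_mul_val, List.replicate_succ, conv_gen_left]
    have h1 : (gen x ^ k).1 (x :: List.replicate k x) = 0 :=
      genpow_len x k (by simp)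
    rw [h1, ih, if_pos rfl]
    ring

theorem geninvpow_sign (x : X) (k : ℕ) (hk : 1 ≤ k) : ∀ (a : ℕ),
    0 < (-1:ℤ)^a * (((gen x)⁻¹ ^ k).1 (List.replicate a x)) := by
  induction k, hk using Nat.le_induction with
  | base =>
    intro a
    rw [pow_one, genInv_val, genInvF]
    rw [if_pos (fun y hy => List.eq_of_mem_replicate hy), List.length_replicate]
    rw [← mul_pow]
    norm_num
  | succ k hk ih =>
    intro a
    have hval : (((gen x)⁻¹ ^ (k+1)).1 (List.replicate a x))
        = ∑ i ∈ Finset.range (a + 1), (-1:ℤ)^i * (((gen x)⁻¹ ^ k).1 (List.replicate (a - i) x)) := by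
      rw [pow_succ', mag_mul_val, conv, List.length_replicate]
      refine Finset.sum_congr rfl fun i hi => ?_
      have hi' : i ≤ a := by have := Finset.mem_range.mp hi; omega
      rw [List.take_replicate, List.drop_replicate, min_eq_left hi']
      congr 1
      rw [genInv_val, genInvF]
      rw [if_pos (fun y hy => List.eq_of_mem_replicate hy), List.length_replicate]
    rw [hval, Finset.mul_sum]
    refine Finset.sum_pos (fun i hi => ?_) ⟨0, by simp⟩
    have hi' : i ≤ a := by have := Finset.mem_range.mp hi; omega
    have hsign : (-1:ℤ)^a * (-1:ℤ)^i = (-1:ℤ)^(a-i) := by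
      rw [← pow_add]
      have h2 : a + i = (a - i) + 2 * i := by omega
      rw [h2, pow_add, pow_mul]
      norm_num
    rw [← mul_assoc, hsign]
    exact ih (a - i)

end MagnusAux
namespace MagnusAux

variable {X : Type*}

noncomputable def blockElt (p : X × Bool × ℕ) : Mag X :=
  (cond p.2.1 (gen p.1) (gen p.1)⁻¹) ^ p.2.2

noncomputable def blockProd (B : List (X × Bool × ℕ)) : Mag X := (B.map blockElt).prod

def blockWord : List (X × Bool × ℕ) → List X
  | [] => []
  | p :: B => List.replicate p.2.2 p.1 ++ blockWord B

theorem blockElt_supp {p : X × Bool × ℕ} {α : List X} (h : (blockElt p).1 α ≠ 0) :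
    ∀ y ∈ α, y = p.1 := by
  rcases p with ⟨x, b, k⟩
  cases b
  · exact geninvpow_supp x k h
  · exact genpow_supp x k h

theorem blockElt_top {p : X × Bool × ℕ} (hk : 1 ≤ p.2.2) :
    (blockElt p).1 (List.replicate p.2.2 p.1) ≠ 0 := by
  rcases p with ⟨x, b, k⟩
  cases b
  · intro hc
    have := geninvpow_sign x k hk k
    rw [blockElt] at hc
    simp only [cond] at hc ⊢
    rw [hc, mul_zero] at this
    exact lt_irrefl 0 this
  · rw [blockElt]
    simp only [cond]
    rw [genpow_top]
    norm_num

theorem lastx {x : X} {u : List X} (hu : u ≠ []) (h : ∀ y ∈ u, y = x) :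
    u.getLast? = some x := by
  rw [List.getLast?_eq_getLast hu]
  exact congrArg some (h _ (List.getLast_mem hu))

theorem blockWord_all {B : List (X × Bool × ℕ)} (hk : ∀ p ∈ B, 1 ≤ p.2.2) :
    B ≠ [] → ∃ q T, B.head? = some q ∧ blockWord B = q.1 :: T := by
  intro hB
  rcases B with _ | ⟨q, B'⟩
  · exact absurd rfl hB
  · refine ⟨q, List.replicate (q.2.2 - 1) q.1 ++ blockWord B', rfl, ?_⟩
    rw [blockWord]
    have h1 : q.2.2 = (q.2.2 - 1) + 1 := by
      have := hk q (List.mem_cons_self); omega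
    rw [h1, List.replicate_succ]
    simp

theorem blockMain (B : List (X × Bool × ℕ)) (hk : ∀ p ∈ B, 1 ≤ p.2.2)
    (hch : List.Chain' (fun p q => p.1 ≠ q.1) B) :
    ((blockProd B).1 (blockWord B) ≠ 0) ∧
    (∀ u : List X, u ≠ [] →
      (∀ q, B.head? = some q → u.getLast? ≠ some q.1) →
      (blockProd B).1 (u ++ blockWord B) = 0) := by
  induction B with
  | nil =>
    constructor
    · rw [blockProd]
      simp [mag_one_val, blockWord]
    · intro u hu _
      rw [blockProd]
      simp only [List.map_nil, List.prod_nil, mag_one_val]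
      rw [blockWord, List.append_nil]
      exact oneF_ne hu
  | cons p B ih =>
    have hk' : ∀ q ∈ B, 1 ≤ q.2.2 := fun q hq => hk q (List.mem_cons_of_mem p hq)
    have hch' : List.Chain' (fun p q => p.1 ≠ q.1) B := hch.tail
    obtain ⟨ihA, ihB⟩ := ih hk' hch'
    have hkp : 1 ≤ p.2.2 := hk p (List.mem_cons_self)
    have hprod : (blockProd (p :: B)).1 = conv (blockElt p).1 (blockProd B).1 := by
      rw [blockProd, List.map_cons, List.prod_cons, mag_mul_val]; rfl
    have hheadB : ∀ q, B.head? = some q → p.1 ≠ q.1 := by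
      intro q hqq
      rcases B with _ | ⟨q', B'⟩
      · simp at hqq
      · have : q' = q := by simpa using hqq
        subst this
        exact (List.isChain_cons_cons.mp hch).1
    -- the word of the tail
    set W := blockWord B with hW
    have hWhead : B ≠ [] → ∃ q T, B.head? = some q ∧ W = q.1 :: T := blockWord_all hk'
    constructor
    · -- main nonvanishing
      rw [hprod]
      have hword : blockWord (p :: B) = List.replicate p.2.2 p.1 ++ W := rfl
      rw [hword, conv]
      rw [Finset.sum_eq_single p.2.2]
      · have ht : (List.replicate p.2.2 p.1 ++ W).take p.2.2 = List.replicate p.2.2 p.1 := by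
          rw [List.take_append, List.take_replicate, min_self]
          simp [List.length_replicate]
        have hd : (List.replicate p.2.2 p.1 ++ W).drop p.2.2 = W := by
          rw [List.drop_append, List.drop_replicate]
          simp [List.length_replicate]
        rw [ht, hd]
        exact mul_ne_zero (blockElt_top hkp) ihA
      · intro i hi hne
        have hi' : i ≤ p.2.2 + W.length := by
          have := Finset.mem_range.mp hi
          simpa [List.length_append, List.length_replicate] using Nat.lt_succ_iff.mp this
        rcases lt_or_gt_of_ne hne with hlt | hgt
        · -- i < k : tail factor vanishes
          have hd : (List.replicate p.2.2 p.1 ++ W).drop i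
              = List.replicate (p.2.2 - i) p.1 ++ W := by
            rw [List.drop_append, List.drop_replicate]
            have : i - (List.replicate p.2.2 p.1).length = 0 := by
              rw [List.length_replicate]; omega
            rw [this, List.drop_zero]
          rw [hd]
          rw [ihB (List.replicate (p.2.2 - i) p.1) (by
            simp only [ne_eq, List.replicate_eq_nil_iff]  -- nonempty
            omega) (by
            intro q hq
            rw [lastx (by simp only [ne_eq, List.replicate_eq_nil_iff]; omega)
              (fun y hy => List.eq_of_mem_replicate hy)]
            intro hcon
            exact hheadB q hq (by injection hcon))]
          ring
        · -- i > k : head factor vanishes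
          by_cases h1 : (blockElt p).1 ((List.replicate p.2.2 p.1 ++ W).take i) = 0
          · rw [h1]; ring
          · exfalso
            have hall := blockElt_supp h1
            have hWne : W ≠ [] := by
              intro hcon
              rw [hcon] at hi'
              simp at hi'
              omega
            obtain ⟨q, T, hq, hWT⟩ := hWhead (by
              intro hcon
              apply hWne
              rw [hW, hcon, blockWord])
            have hmem : q.1 ∈ (List.replicate p.2.2 p.1 ++ W).take i := by
              rw [List.take_append, List.take_replicate]
              rw [min_eq_right (by omega : p.2.2 ≤ i)]
              refine List.mem_append.mpr (Or.inr ?_)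
              rw [hWT]
              have : 1 ≤ i - (List.replicate p.2.2 p.1).length := by
                rw [List.length_replicate]; omega
              rcases Nat.exists_eq_succ_of_ne_zero (by omega :
                i - (List.replicate p.2.2 p.1).length ≠ 0) with ⟨m, hm⟩
              rw [hm, List.take_succ_cons]
              exact List.mem_cons_self
            exact hheadB q hq ((hall q.1 hmem).symm)
      · intro hcon
        exfalso
        refine hcon (Finset.mem_range.mpr ?_)
        simp [List.length_append, List.length_replicate]
    · -- vanishing with junk prefix
      intro u hu hlast
      have hlastp : u.getLast? ≠ some p.1 := hlast p rfl
      rw [hprod]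
      have hword : blockWord (p :: B) = List.replicate p.2.2 p.1 ++ W := rfl
      rw [hword, ← List.append_assoc, conv]
      refine Finset.sum_eq_zero fun i hi => ?_
      set v := u ++ List.replicate p.2.2 p.1 ++ W with hv
      rcases lt_or_ge i u.length with hlt | hge
      · -- kill the tail factor via IH
        have hd : v.drop i = (u.drop i ++ List.replicate p.2.2 p.1) ++ W := by
          rw [hv, List.append_assoc, List.drop_append]
          have : i - u.length = 0 := by omega
          rw [this, List.drop_zero, List.append_assoc]
        rw [hd]
        rw [ihB (u.drop i ++ List.replicate p.2.2 p.1) (by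
          simp only [ne_eq, List.append_eq_nil_iff]
          rintro ⟨-, h2⟩
          rw [List.replicate_eq_nil_iff] at h2
          omega) (by
          intro q hq
          rw [List.getLast?_append_of_ne_nil _ (by
            simp only [ne_eq, List.replicate_eq_nil_iff]; omega)]
          rw [lastx (by simp only [ne_eq, List.replicate_eq_nil_iff]; omega)
            (fun y hy => List.eq_of_mem_replicate hy)]
          intro hcon
          exact hheadB q hq (by injection hcon))]
        ring
      · -- the head factor vanishes
        by_cases h1 : (blockElt p).1 (v.take i) = 0
        · rw [h1]; ring
        · exfalso
          have hall := blockElt_supp h1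
          have hupref : v.take i = u ++ (List.replicate p.2.2 p.1 ++ W).take (i - u.length) := by
            rw [hv, List.append_assoc, List.take_append,
              List.take_of_length_le (by omega)]
          have hux : ∀ y ∈ u, y = p.1 := by
            intro y hy
            exact hall y (by rw [hupref]; exact List.mem_append.mpr (Or.inl hy))
          exact hlastp (lastx hu hux)

end MagnusAux
namespace MagnusAux

variable {X : Type*}

open scoped Classical in
/-- Prepend a letter to a block decomposition. -/
noncomputable def blkCons (x : X) (b : Bool) : List (X × Bool × ℕ) → List (X × Bool × ℕ)
  | [] => [(x, b, 1)]
  | (y, c, k) :: B => if x = y ∧ b = c then (y, c, k+1) :: B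
      else (x, b, 1) :: (y, c, k) :: B

/-- Decomposition of a word into blocks of consecutive equal letters. -/
noncomputable def blk : List (X × Bool) → List (X × Bool × ℕ)
  | [] => []
  | (x, b) :: l => blkCons x b (blk l)

noncomputable def wordProd (l : List (X × Bool)) : Mag X :=
  (l.map fun p => cond p.2 (gen p.1) (gen p.1)⁻¹).prod

/-- Reduced words: no adjacent cancelling pair. -/
def Red (l : List (X × Bool)) : Prop :=
  List.Chain' (fun p q : X × Bool => p.1 = q.1 → p.2 = q.2) l

theorem blk_head (x : X) (b : Bool) (l : List (X × Bool)) :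
    ∃ k B', 1 ≤ k ∧ blk ((x, b) :: l) = (x, b, k) :: B' := by
  rw [blk]
  rcases hB : blk l with _ | ⟨⟨y, c, k⟩, B⟩
  · exact ⟨1, [], le_refl 1, by rw [blkCons]⟩
  · by_cases h : x = y ∧ b = c
    · obtain ⟨rfl, rfl⟩ := h
      exact ⟨k + 1, B, by omega, by rw [blkCons, if_pos ⟨rfl, rfl⟩]⟩
    · exact ⟨1, (y, c, k) :: B, le_refl 1, by rw [blkCons, if_neg h]⟩

theorem blk_counts : ∀ l : List (X × Bool), ∀ p ∈ blk l, 1 ≤ p.2.2 := by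
  intro l
  induction l with
  | nil => intro p hp; rw [blk] at hp; simp at hp
  | cons q l ih =>
    rcases q with ⟨x, b⟩
    intro p hp
    rw [blk] at hp
    rcases hB : blk l with _ | ⟨⟨y, c, k⟩, B⟩
    · rw [hB, blkCons] at hp
      simp at hp
      subst hp; simp
    · rw [hB, blkCons] at hp
      by_cases h : x = y ∧ b = c
      · rw [if_pos h] at hp
        rcases List.mem_cons.mp hp with rfl | hp'
        · simp
        · exact ih p (hB ▸ List.mem_cons_of_mem _ hp')
      · rw [if_neg h] at hp
        rcases List.mem_cons.mp hp with rfl | hp'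
        · simp
        · exact ih p (hB ▸ hp')

theorem blk_word : ∀ l : List (X × Bool), Red l → blockWord (blk l) = l.map Prod.fst := by
  intro l
  induction l with
  | nil => intro _; rw [blk]; rfl
  | cons q l ih =>
    rcases q with ⟨x, b⟩
    intro hred
    have hred' : Red l := hred.tail
    rw [blk]
    rcases hB : blk l with _ | ⟨⟨y, c, k⟩, B⟩
    · rw [blkCons]
      have : l.map Prod.fst = [] := by
        rw [← ih hred', hB]; rfl
      simp only [List.map_cons, this]
      rfl
    · rw [blkCons]
      by_cases h : x = y ∧ b = c
      · obtain ⟨rfl, rfl⟩ := h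
        rw [if_pos ⟨rfl, rfl⟩]
        have hw : blockWord ((x, b, k) :: B) = l.map Prod.fst := by
          rw [← hB]; exact ih hred'
        rw [List.map_cons, ← hw]
        rw [blockWord, blockWord, List.replicate_succ]
        rfl
      · rw [if_neg h]
        have hw : blockWord ((y, c, k) :: B) = l.map Prod.fst := by
          rw [← hB]; exact ih hred'
        rw [List.map_cons, ← hw]
        rfl

theorem blk_chain : ∀ l : List (X × Bool), Red l →
    List.Chain' (fun p q : X × Bool × ℕ => p.1 ≠ q.1) (blk l) := by
  intro l
  induction l with
  | nil => intro _; rw [blk]; exact List.IsChain.nil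
  | cons q l ih =>
    rcases q with ⟨x, b⟩
    intro hred
    have hred' : Red l := hred.tail
    rw [blk]
    rcases hB : blk l with _ | ⟨⟨y, c, k⟩, B⟩
    · rw [blkCons]; exact List.isChain_singleton _
    · rw [blkCons]
      have hch := hB ▸ ih hred'
      by_cases h : x = y ∧ b = c
      · obtain ⟨rfl, rfl⟩ := h
        rw [if_pos ⟨rfl, rfl⟩]
        rcases B with _ | ⟨r, B'⟩
        · exact List.isChain_singleton _
        · have hh := List.isChain_cons_cons.mp hch
          exact List.isChain_cons_cons.mpr ⟨hh.1, hh.2⟩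
      · rw [if_neg h]
        refine List.isChain_cons_cons.mpr ⟨?_, hch⟩
        -- x ≠ y : if x = y then by reducedness b = c, contradiction
        intro hxy
        apply h
        refine ⟨hxy, ?_⟩
        -- head of l is (y, c, ...) : first letter of l is (y, c)
        rcases l with _ | ⟨⟨x', b'⟩, t⟩
        · rw [blk] at hB; simp at hB
        · obtain ⟨k', B'', _, hB'⟩ := blk_head x' b' t
          rw [hB'] at hB
          injection hB with hh _
          have h1 : x' = y ∧ b' = c :=
            ⟨congrArg (fun p => p.1) hh, congrArg (fun p => p.2.1) hh⟩
          obtain ⟨rfl, rfl⟩ := h1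
          exact (List.isChain_cons_cons.mp hred).1 hxy

theorem blk_prod : ∀ l : List (X × Bool), wordProd l = blockProd (blk l) := by
  intro l
  induction l with
  | nil => rw [blk]; rfl
  | cons q l ih =>
    rcases q with ⟨x, b⟩
    have hcons : wordProd ((x, b) :: l) = (cond b (gen x) (gen x)⁻¹) * wordProd l := by
      rw [wordProd, wordProd, List.map_cons, List.prod_cons]
    rw [hcons, blk]
    rcases hB : blk l with _ | ⟨⟨y, c, k⟩, B⟩
    · rw [blkCons, ih, hB]
      rw [blockProd, blockProd, List.map_cons, List.map_nil, List.prod_cons, List.prod_nil]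
      rw [blockElt, pow_one]
    · by_cases h : x = y ∧ b = c
      · obtain ⟨rfl, rfl⟩ := h
        rw [blkCons, if_pos ⟨rfl, rfl⟩, ih, hB]
        rw [blockProd, blockProd, List.map_cons, List.map_cons, List.prod_cons, List.prod_cons]
        rw [← mul_assoc]
        congr 1
        rw [blockElt, blockElt, pow_succ']
      · rw [blkCons, if_neg h, ih, hB]
        rw [blockProd, blockProd, List.map_cons, List.map_cons, List.map_cons,
          List.prod_cons, List.prod_cons, List.prod_cons]
        congr 1
        rw [blockElt, pow_one]

theorem red_of_nocancel : ∀ l : List (X × Bool),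
    (∀ (L₂ : List (X × Bool)) (x : X) (b : Bool) (L₃ : List (X × Bool)),
      l ≠ L₂ ++ (x, b) :: (x, !b) :: L₃) → Red l := by
  intro l
  induction l with
  | nil => intro _; exact List.IsChain.nil
  | cons p l ih =>
    intro h
    rcases l with _ | ⟨q, t⟩
    · exact List.isChain_singleton p
    · refine List.isChain_cons_cons.mpr ⟨?_, ih ?_⟩
      · rcases p with ⟨px, pb⟩
        rcases q with ⟨qx, qb⟩
        intro h1
        by_contra h2
        dsimp only at h1 h2
        subst h1
        have hqb : qb = !pb := by cases pb <;> cases qb <;> simp_all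
        exact h [] px pb t (by rw [hqb]; rfl)
      · intro L₂ x b L₃ hcon
        exact h (p :: L₂) x b L₃ (by rw [hcon]; rfl)

end MagnusAux
namespace MagnusAux

variable {X : Type*}
open scoped Classical

/-- The Magnus homomorphism. -/
noncomputable def mu : FreeGroup X →* Mag X := FreeGroup.lift gen

theorem mu_mk (l : List (X × Bool)) : mu (FreeGroup.mk l) = wordProd l :=
  FreeGroup.lift_mk

theorem red_toWord (g : FreeGroup X) : Red g.toWord := by
  refine red_of_nocancel _ fun L₂ x b L₃ hcon => ?_
  exact FreeGroup.reduce.not ((FreeGroup.reduce_toWord g).trans hcon)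

theorem mu_val_ne_zero {g : FreeGroup X} (hg : g ≠ 1) :
    (mu g).1 (g.toWord.map Prod.fst) ≠ 0 := by
  have h1 : mu g = wordProd g.toWord := by
    conv_lhs => rw [← FreeGroup.mk_toWord (x := g)]
    exact mu_mk _
  have hred := red_toWord g
  rw [h1, blk_prod, ← blk_word _ hred]
  exact (blockMain _ (blk_counts _) (blk_chain _ hred)).1

theorem mu_ne_one {g : FreeGroup X} (hg : g ≠ 1) : mu g ≠ 1 := by
  intro hmu
  have h2 := mu_val_ne_zero hg
  rw [hmu, mag_one_val] at h2
  refine h2 (oneF_ne ?_)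
  intro hcon
  rw [List.map_eq_nil_iff] at hcon
  exact hg (FreeGroup.toWord_eq_nil_iff.mp hcon)

end MagnusAux
namespace MagnusAux

variable {X : Type*}
open scoped Classical

/-- Length-then-well-order ordering on words. -/
def wlt (u v : List X) : Prop :=
  u.length < v.length ∨ (u.length = v.length ∧ WellOrderingRel u v)

theorem wlt_of_length_lt {u v : List X} (h : u.length < v.length) : wlt u v := Or.inl h

theorem wlt_length_le {u v : List X} (h : wlt u v) : u.length ≤ v.length := by
  rcases h with h | ⟨h, _⟩ <;> omega

theorem wlt_trichotomy (u v : List X) : wlt u v ∨ u = v ∨ wlt v u := by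
  rcases Nat.lt_trichotomy u.length v.length with h | h | h
  · exact Or.inl (Or.inl h)
  · rcases trichotomous_of WellOrderingRel u v with h2 | h2 | h2
    · exact Or.inl (Or.inr ⟨h, h2⟩)
    · exact Or.inr (Or.inl h2)
    · exact Or.inr (Or.inr (Or.inr ⟨h.symm, h2⟩))
  · exact Or.inr (Or.inr (Or.inl h))

theorem wlt_irrefl (u : List X) : ¬ wlt u u := by
  rintro (h | ⟨-, h⟩)
  · omega
  · exact (irrefl_of WellOrderingRel u) h

theorem wlt_trans {u v w : List X} (h1 : wlt u v) (h2 : wlt v w) : wlt u w := by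
  rcases h1 with h1 | ⟨h1, h1'⟩ <;> rcases h2 with h2 | ⟨h2, h2'⟩
  · exact Or.inl (by omega)
  · exact Or.inl (by omega)
  · exact Or.inl (by omega)
  · exact Or.inr ⟨by omega, trans_of WellOrderingRel h1' h2'⟩

theorem wlt_asymm {u v : List X} (h1 : wlt u v) (h2 : wlt v u) : False :=
  wlt_irrefl u (wlt_trans h1 h2)

/-- Existence of a minimal element of the support of a nonzero coefficient function. -/
theorem exists_min {d : List X → ℤ} (hd : ∃ w, d w ≠ 0) :
    ∃ w₀, d w₀ ≠ 0 ∧ ∀ v, wlt v w₀ → d v = 0 := by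
  have hn : ∃ n, ∃ w : List X, w.length = n ∧ d w ≠ 0 := by
    obtain ⟨w, hw⟩ := hd
    exact ⟨w.length, w, rfl, hw⟩
  classical
  let n := Nat.find hn
  obtain ⟨w1, hw1len, hw1⟩ := Nat.find_spec hn
  have hset : {w : List X | w.length = n ∧ d w ≠ 0}.Nonempty := ⟨w1, hw1len, hw1⟩
  obtain ⟨w₀, ⟨hw₀len, hw₀⟩, hmin⟩ :=
    (IsWellFounded.wf (r := WellOrderingRel (α := List X))).has_min _ hset
  refine ⟨w₀, hw₀, fun v hv => ?_⟩
  by_contra hvne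
  rcases hv with hv | ⟨hv, hv'⟩
  · rw [hw₀len] at hv
    exact Nat.find_min hn hv ⟨v, rfl, hvne⟩
  · exact hmin v ⟨by omega, hvne⟩ hv'

/-- The "deviation" of the Magnus expansion from 1. -/
noncomputable def D (g : FreeGroup X) : List X → ℤ :=
  fun w => (mu g).1 w - oneF w

theorem D_nil (g : FreeGroup X) : D g [] = 0 := by
  rw [D, (mu g).2, oneF_nil]; ring

theorem D_eq_zero_iff {g : FreeGroup X} : (∀ w, D g w = 0) ↔ mu g = 1 := by
  constructor
  · intro h
    apply Subtype.ext
    funext w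
    have := h w
    rw [D, sub_eq_zero] at this
    rw [this, mag_one_val]
  · intro h w
    rw [D, h, mag_one_val, sub_self]

/-- conv linearity lemmas -/
theorem conv_add_left (f f' g : List X → ℤ) :
    conv (fun w => f w + f' w) g = fun w => conv f g w + conv f' g w := by
  funext w
  rw [conv, conv, conv, ← Finset.sum_add_distrib]
  exact Finset.sum_congr rfl fun i _ => by ring

theorem conv_add_right (f g g' : List X → ℤ) :
    conv f (fun w => g w + g' w) = fun w => conv f g w + conv f g' w := by
  funext w
  rw [conv, conv, conv, ← Finset.sum_add_distrib]
  exact Finset.sum_congr rfl fun i _ => by ring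

/-- first lowest-coefficient lemma : convolving on the left by constant term 1. -/
theorem lowL {u d : List X → ℤ} (hu : u [] = 1) (hd : d [] = 0) {w₀ : List X}
    (hmin : ∀ α, wlt α w₀ → d α = 0) :
    (∀ w, wlt w w₀ → conv u d w = 0) ∧ conv u d w₀ = d w₀ := by
  constructor
  · intro w hw
    rw [conv]
    refine Finset.sum_eq_zero fun i hi => ?_
    have hzero : d (w.drop i) = 0 := by
      apply hmin
      rcases hw with hw | ⟨hw, hw'⟩
      · refine Or.inl ?_
        rw [List.length_drop]; omega
      · rcases Nat.eq_zero_or_pos i with rfl | hipos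
        · rw [List.drop_zero]; exact Or.inr ⟨hw, hw'⟩
        · rcases Nat.eq_zero_or_pos w.length with hwlen | hwlen
          · have : i = 0 := by
              have := Finset.mem_range.mp hi; omega
            omega
          · refine Or.inl ?_
            rw [List.length_drop]; omega
    rw [hzero, mul_zero]
  · rw [conv, Finset.sum_eq_single 0]
    · rw [List.take_zero, List.drop_zero, hu, one_mul]
    · intro i hi hine
      have hzero : d (w₀.drop i) = 0 := by
        apply hmin
        refine Or.inl ?_
        have := Finset.mem_range.mp hi
        rw [List.length_drop]
        omega
      rw [hzero, mul_zero]
    · intro h; simp at h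
  
/-- second lowest-coefficient lemma : convolving on the right by constant term 1. -/
theorem lowR {e v : List X → ℤ} (hv : v [] = 1) (he : e [] = 0) {w₀ : List X}
    (hmin : ∀ α, wlt α w₀ → e α = 0) :
    (∀ w, wlt w w₀ → conv e v w = 0) ∧ conv e v w₀ = e w₀ := by
  constructor
  · intro w hw
    rw [conv]
    refine Finset.sum_eq_zero fun i hi => ?_
    have hzero : e (w.take i) = 0 := by
      apply hmin
      have hlen : (w.take i).length ≤ w.length := by
        rw [List.length_take]; omega
      rcases hw with hw | ⟨hw, hw'⟩
      · exact Or.inl (by omega)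
      · rcases Nat.lt_or_ge (w.take i).length w.length with h2 | h2
        · exact Or.inl (by omega)
        · have : w.take i = w := by
            apply List.take_of_length_le
            rw [List.length_take] at h2
            omega
          rw [this]
          exact Or.inr ⟨hw, hw'⟩
    rw [hzero, zero_mul]
  · rw [conv, Finset.sum_eq_single w₀.length]
    · rw [List.take_length, List.drop_length, hv, mul_one]
    · intro i hi hine
      have hzero : e (w₀.take i) = 0 := by
        apply hmin
        refine Or.inl ?_
        have := Finset.mem_range.mp hi
        rw [List.length_take]
        omega
      rw [hzero, zero_mul]
    · intro h; simp at h

/-- The positive cone. -/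
noncomputable def Pos (g : FreeGroup X) : Prop :=
  ∃ w₀, 0 < D g w₀ ∧ ∀ v, wlt v w₀ → D g v = 0

theorem not_pos_one : ¬ Pos (1 : FreeGroup X) := by
  rintro ⟨w₀, hpos, -⟩
  have : D (1 : FreeGroup X) w₀ = 0 := by
    rw [D, map_one, mag_one_val, sub_self]
  omega

theorem pos_witness_ne_nil {g : FreeGroup X} {w₀ : List X} (h : 0 < D g w₀) : w₀ ≠ [] := by
  intro hcon
  rw [hcon, D_nil] at h
  omega

/-- decomposition of D of a product. -/
theorem D_mul (g h : FreeGroup X) :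
    ∀ w, D (g * h) w = D g w + D h w + conv (D g) (D h) w := by
  intro w
  have hval : (mu (g * h)).1 = conv (mu g).1 (mu h).1 := by
    rw [map_mul, mag_mul_val]
  have hg : (mu g).1 = fun w => oneF w + D g w := by
    funext w; rw [D]; ring
  have hh : (mu h).1 = fun w => oneF w + D h w := by
    funext w; rw [D]; ring
  have : conv (mu g).1 (mu h).1 w
      = oneF w + D h w + D g w + conv (D g) (D h) w := by
    rw [hg, hh, conv_add_left]
    have h1 : conv oneF (fun w => oneF w + D h w) = fun w => oneF w + D h w := conv_one_left _
    have h2 : conv (D g) (fun w => oneF w + D h w)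
        = fun w => conv (D g) oneF w + conv (D g) (D h) w := conv_add_right _ _ _
    rw [h1, h2, conv_one_right]
    ring
  rw [D, hval, this]
  ring

theorem pos_mul {g h : FreeGroup X} (hg : Pos g) (hh : Pos h) : Pos (g * h) := by
  obtain ⟨w₁, hw₁pos, hw₁min⟩ := hg
  obtain ⟨w₂, hw₂pos, hw₂min⟩ := hh
  have hw₁ne := pos_witness_ne_nil hw₁pos
  have hw₂ne := pos_witness_ne_nil hw₂pos
  have hconv : ∀ w, w.length < w₁.length + w₂.length → conv (D g) (D h) w = 0 := by
    intro w hw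
    rw [conv]
    refine Finset.sum_eq_zero fun i hi => ?_
    by_cases h1 : D g (w.take i) = 0
    · rw [h1, zero_mul]
    · by_cases h2 : D h (w.drop i) = 0
      · rw [h2, mul_zero]
      · exfalso
        have k1 : ¬ wlt (w.take i) w₁ := fun hc => h1 (hw₁min _ hc)
        have k2 : ¬ wlt (w.drop i) w₂ := fun hc => h2 (hw₂min _ hc)
        have l1 : w₁.length ≤ (w.take i).length := by
          by_contra hc
          exact k1 (Or.inl (by omega))
        have l2 : w₂.length ≤ (w.drop i).length := by
          by_contra hc
          exact k2 (Or.inl (by omega))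
        rw [List.length_take] at l1
        rw [List.length_drop] at l2
        have := Finset.mem_range.mp hi
        omega
  -- the candidate witness: the wlt-smaller of w₁ w₂
  rcases wlt_trichotomy w₁ w₂ with hcmp | hcmp | hcmp
  · refine ⟨w₁, ?_, ?_⟩
    · rw [D_mul]
      rw [hw₂min _ hcmp, hconv _ (by
        have := wlt_length_le hcmp
        have : 1 ≤ w₂.length := by
          rcases w₂ with _ | _
          · exact absurd rfl hw₂ne
          · simp
        omega)]
      omega
    · intro v hv
      rw [D_mul, hw₁min _ hv, hw₂min _ (wlt_trans hv hcmp), hconv _ (by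
        have h1 := wlt_length_le hv
        have h2 := wlt_length_le hcmp
        have : 1 ≤ w₂.length := by
          rcases w₂ with _ | _
          · exact absurd rfl hw₂ne
          · simp
        omega)]
      ring
  · subst hcmp
    refine ⟨w₁, ?_, ?_⟩
    · rw [D_mul, hconv _ (by
        have : 1 ≤ w₁.length := by
          rcases w₁ with _ | _
          · exact absurd rfl hw₁ne
          · simp
        omega)]
      omega
    · intro v hv
      rw [D_mul, hw₁min _ hv, hw₂min _ hv, hconv _ (by
        have h1 := wlt_length_le hv
        have : 1 ≤ w₁.length := by
          rcases w₁ with _ | _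
          · exact absurd rfl hw₁ne
          · simp
        omega)]
      ring
  · refine ⟨w₂, ?_, ?_⟩
    · rw [D_mul]
      rw [hw₁min _ hcmp, hconv _ (by
        have := wlt_length_le hcmp
        have : 1 ≤ w₁.length := by
          rcases w₁ with _ | _
          · exact absurd rfl hw₁ne
          · simp
        omega)]
      omega
    · intro v hv
      rw [D_mul, hw₂min _ hv, hw₁min _ (wlt_trans hv hcmp), hconv _ (by
        have h1 := wlt_length_le hv
        have h2 := wlt_length_le hcmp
        have : 1 ≤ w₁.length := by
          rcases w₁ with _ | _
          · exact absurd rfl hw₁ne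
          · simp
        omega)]
      ring

/-- D of a conjugate. -/
theorem D_conj (r g : FreeGroup X) :
    ∀ w, D (r⁻¹ * g * r) w = conv (conv (mu r⁻¹).1 (D g)) (mu r).1 w := by
  intro w
  have hexp : (mu (r⁻¹ * g * r)).1 = conv (conv (mu r⁻¹).1 (mu g).1) (mu r).1 := by
    rw [map_mul, map_mul, mag_mul_val, mag_mul_val]
  have hg : (mu g).1 = fun v => oneF v + D g v := by
    funext v; rw [D]; ring
  have e1 : conv (mu r⁻¹).1 (mu g).1 = fun v => (mu r⁻¹).1 v + conv (mu r⁻¹).1 (D g) v := by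
    rw [hg, conv_add_right, conv_one_right]
  have e3 : conv (mu r⁻¹).1 (mu r).1 = oneF := by
    have h4 : conv (mu r⁻¹).1 (mu r).1 = (mu (r⁻¹ * r)).1 := by rw [map_mul, mag_mul_val]
    rw [h4, inv_mul_cancel, map_one, mag_one_val]
  have e2 : conv (conv (mu r⁻¹).1 (mu g).1) (mu r).1
      = fun v => oneF v + conv (conv (mu r⁻¹).1 (D g)) (mu r).1 v := by
    rw [e1, conv_add_left, e3]
  rw [D, hexp, e2]
  show oneF w + conv (conv (mu r⁻¹).1 (D g)) (mu r).1 w - oneF w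
      = conv (conv (mu r⁻¹).1 (D g)) (mu r).1 w
  ring

theorem pos_conj {g : FreeGroup X} (r : FreeGroup X) (hg : Pos g) : Pos (r⁻¹ * g * r) := by
  obtain ⟨w₀, hpos, hmin⟩ := hg
  have hA : (mu r⁻¹).1 [] = 1 := (mu r⁻¹).2
  have hC : (mu r).1 [] = 1 := (mu r).2
  have hL := lowL hA (D_nil g) hmin
  have he0 : conv (mu r⁻¹).1 (D g) [] = 0 := by
    rw [conv]
    simp only [List.length_nil, zero_add, Finset.sum_range_one, List.take_nil, List.drop_nil]
    rw [D_nil, mul_zero]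
  have hR := lowR hC he0 hL.1
  refine ⟨w₀, ?_, ?_⟩
  · rw [D_conj, hR.2, hL.2]
    exact hpos
  · intro v hv
    rw [D_conj]
    exact hR.1 v hv

theorem D_inv (g : FreeGroup X) :
    ∀ w, D g⁻¹ w = -(conv (mu g⁻¹).1 (D g) w) := by
  intro w
  have e3 : conv (mu g⁻¹).1 (mu g).1 = oneF := by
    have h4 : conv (mu g⁻¹).1 (mu g).1 = (mu (g⁻¹ * g)).1 := by rw [map_mul, mag_mul_val]
    rw [h4, inv_mul_cancel, map_one, mag_one_val]
  have hg : (mu g).1 = fun v => oneF v + D g v := by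
    funext v; rw [D]; ring
  have e1 : conv (mu g⁻¹).1 (mu g).1 = fun v => (mu g⁻¹).1 v + conv (mu g⁻¹).1 (D g) v := by
    rw [hg, conv_add_right, conv_one_right]
  have h2 : (mu g⁻¹).1 w + conv (mu g⁻¹).1 (D g) w = oneF w :=
    congrFun (e1.symm.trans e3) w
  show (mu g⁻¹).1 w - oneF w = -(conv (mu g⁻¹).1 (D g) w)
  linarith [h2]

theorem pos_total {g : FreeGroup X} (hg : g ≠ 1) : Pos g ∨ Pos g⁻¹ := by
  have hmu := mu_ne_one hg
  have hD : ∃ w, D g w ≠ 0 := by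
    by_contra hc
    push_neg at hc
    exact hmu (D_eq_zero_iff.mp hc)
  obtain ⟨w₀, hne, hmin⟩ := exists_min hD
  rcases lt_or_gt_of_ne hne with hneg | hpos
  · right
    have hA : (mu g⁻¹).1 [] = 1 := (mu g⁻¹).2
    have hL := lowL hA (D_nil g) hmin
    refine ⟨w₀, ?_, ?_⟩
    · rw [D_inv, hL.2]; omega
    · intro v hv
      rw [D_inv, hL.1 v hv]
      ring
  · exact Or.inl ⟨w₀, hpos, hmin⟩

end MagnusAux
namespace MagnusAux

variable {X : Type*}
open scoped Classical

/-- Indicator homomorphism to `Multiplicative ℤ`. -/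
noncomputable def phi (y : X) : FreeGroup X →* Multiplicative ℤ :=
  FreeGroup.lift (fun z => Multiplicative.ofAdd (if z = y then (1:ℤ) else 0))

theorem phi_conj (y x : X) (w : FreeGroup X) :
    (phi y (w⁻¹ * FreeGroup.of x * w)).toAdd = (if x = y then (1:ℤ) else 0) := by
  have hc : ∀ A B : Multiplicative ℤ, A⁻¹ * B * A = B := by
    intro A B
    rw [mul_comm A⁻¹ B, mul_assoc, inv_mul_cancel, mul_one]
  have h : phi y (w⁻¹ * FreeGroup.of x * w) = phi y (FreeGroup.of x) := by
    rw [map_mul, map_mul, map_inv, hc]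
  rw [h, phi, FreeGroup.lift_apply_of]
  rfl

/-- An element commuting with a conjugate of a generator is a power of it. -/
theorem power_of_commute (qhat t : FreeGroup X)
    (hq : ∃ (x : X) (w : FreeGroup X), qhat = w⁻¹ * FreeGroup.of x * w)
    (hcomm : qhat * t = t * qhat) :
    ∃ N : ℤ, t = qhat ^ N := by
  set H := Subgroup.closure ({qhat, t} : Set (FreeGroup X)) with hH
  have hqH : qhat ∈ H := Subgroup.subset_closure (by simp)
  have htH : t ∈ H := Subgroup.subset_closure (by simp)
  have hab : ∀ a ∈ H, ∀ b ∈ H, a * b = b * a := by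
    intro a ha b hb
    refine Subgroup.closure_induction₂
      (p := fun a b _ _ => a * b = b * a) ?_ ?_ ?_ ?_ ?_ ?_ ?_ ha hb
    · intro x y hx hy
      simp only [Set.mem_insert_iff, Set.mem_singleton_iff] at hx hy
      rcases hx with rfl | rfl <;> rcases hy with rfl | rfl
      · rfl
      · exact hcomm
      · exact hcomm.symm
      · rfl
    · intro x _; exact (Commute.one_left x)
    · intro x _; exact (Commute.one_right x)
    · intro x y z _ _ _ h1 h2
      exact Commute.mul_left h1 h2
    · intro y z x _ _ _ h1 h2
      exact Commute.mul_right h1 h2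
    · intro x y _ _ h
      exact Commute.inv_left h
    · intro x y _ _ h
      exact Commute.inv_right h
  -- the generators of the free group H pairwise coincide
  have hsub : ∀ a b : IsFreeGroup.Generators H, a = b := by
    intro a b
    by_contra hab'
    have h1 : (IsFreeGroup.of a : H) * IsFreeGroup.of b
        = IsFreeGroup.of b * IsFreeGroup.of a := by
      apply Subtype.ext
      push_cast
      exact hab _ (SetLike.coe_mem _) _ (SetLike.coe_mem _)
    set σ : Equiv.Perm (Fin 3) := Equiv.swap 0 1 with hσ
    set τ : Equiv.Perm (Fin 3) := Equiv.swap 1 2 with hτ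
    set ψ : H →* Equiv.Perm (Fin 3) :=
      IsFreeGroup.lift (fun c => if c = a then σ else τ) with hψ
    have hψa : ψ (IsFreeGroup.of a) = σ := by
      rw [hψ, IsFreeGroup.lift_of, if_pos rfl]
    have hψb : ψ (IsFreeGroup.of b) = τ := by
      rw [hψ, IsFreeGroup.lift_of, if_neg (fun hc => hab' hc.symm)]
    have h2 := congrArg ψ h1
    rw [map_mul, map_mul, hψa, hψb] at h2
    have h3 : σ * τ ≠ τ * σ := by
      rw [hσ, hτ]
      decide
    exact h3 h2
  -- H is cyclic
  have hcyc : ∃ u : FreeGroup X, (∀ h ∈ H, ∃ n : ℤ, h = u ^ n) := by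
    set T := IsFreeGroup.Generators H with hT
    set e := IsFreeGroup.toFreeGroup (G := H) with he
    rcases isEmpty_or_nonempty T with hemp | ⟨⟨τ₀⟩⟩
    · refine ⟨1, fun h hh => ⟨0, ?_⟩⟩
      have htriv : ∀ g : FreeGroup T, g = 1 := by
        intro g
        have h1 := FreeGroup.closure_range_of T
        rw [Set.range_eq_empty (FreeGroup.of : T → FreeGroup T), Subgroup.closure_empty] at h1
        have h2 : g ∈ (⊥ : Subgroup (FreeGroup T)) := by
          rw [h1]; trivial
        exact Subgroup.mem_bot.mp h2
      have h4 : (⟨h, hh⟩ : H) = 1 := by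
        have h5 := htriv (e ⟨h, hh⟩)
        have h6 := congrArg e.symm h5
        rw [MulEquiv.symm_apply_apply, map_one] at h6
        exact h6
      have := congrArg (Subtype.val : H → FreeGroup X) h4
      simpa using this
    · refine ⟨((e.symm (FreeGroup.of τ₀) : H) : FreeGroup X), fun h hh => ?_⟩
      have hmem : e ⟨h, hh⟩ ∈ Subgroup.zpowers (FreeGroup.of τ₀) := by
        have h1 : Subgroup.closure (Set.range (FreeGroup.of : T → FreeGroup T))
            ≤ Subgroup.zpowers (FreeGroup.of τ₀) := by
          rw [Subgroup.closure_le]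
          rintro _ ⟨x, rfl⟩
          rw [hsub x τ₀]
          exact Subgroup.mem_zpowers _
        exact h1 (by rw [FreeGroup.closure_range_of]; trivial)
      obtain ⟨n, hn⟩ := Subgroup.mem_zpowers_iff.mp hmem
      refine ⟨n, ?_⟩
      have h2 := congrArg e.symm hn
      rw [map_zpow, MulEquiv.symm_apply_apply] at h2
      have h3 := congrArg (Subtype.val : H → FreeGroup X) h2
      rw [SubgroupClass.coe_zpow] at h3
      exact h3.symm
  obtain ⟨u, hu⟩ := hcyc
  obtain ⟨m, hm⟩ := hu qhat hqH
  obtain ⟨n, hn⟩ := hu t htH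
  obtain ⟨xq, wq, hxq⟩ := hq
  -- the exponent of qhat over u is ±1
  have hphi : (phi xq qhat).toAdd = 1 := by
    rw [hxq, phi_conj, if_pos rfl]
  have hphim : Multiplicative.toAdd (phi xq u) * m = 1 := by
    rw [← hphi, hm, map_zpow]
    simp [toAdd_zpow, smul_eq_mul, mul_comm]
  have hm1 : m = 1 ∨ m = -1 := by
    have : IsUnit m := IsUnit.of_mul_eq_one (a := m) _ (by rw [mul_comm]; exact hphim)
    exact Int.isUnit_iff.mp this
  rcases hm1 with rfl | rfl
  · rw [zpow_one] at hm
    exact ⟨n, by rw [hn, hm]⟩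
  · have hu' : u = qhat⁻¹ := by
      rw [hm, zpow_neg, zpow_one, inv_inv]
    refine ⟨-n, ?_⟩
    rw [hn, hu', inv_zpow, ← zpow_neg]

end MagnusAux
namespace MagnusAux

variable {X : Type*}
open scoped Classical

theorem semilatin (qhat r s : FreeGroup X)
    (hq : ∃ (x : X) (w : FreeGroup X), qhat = w⁻¹ * FreeGroup.of x * w)
    (hr : ∃ (x : X) (w : FreeGroup X), r = w⁻¹ * FreeGroup.of x * w)
    (hs : ∃ (x : X) (w : FreeGroup X), s = w⁻¹ * FreeGroup.of x * w)
    (heq : r⁻¹ * qhat * r = s⁻¹ * qhat * s) : r = s := by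
  have hcomm : qhat * (r * s⁻¹) = (r * s⁻¹) * qhat := by
    calc qhat * (r * s⁻¹) = r * (r⁻¹ * qhat * r) * s⁻¹ := by group
      _ = r * (s⁻¹ * qhat * s) * s⁻¹ := by rw [heq]
      _ = (r * s⁻¹) * qhat := by group
  obtain ⟨N, hN⟩ := power_of_commute qhat (r * s⁻¹) hq hcomm
  obtain ⟨xr, wr, hxr⟩ := hr
  obtain ⟨xs, ws, hxs⟩ := hs
  obtain ⟨xq, wq, hxq⟩ := hq
  have hr' : r = qhat ^ N * s := by rw [← hN]; group
  have kq : ∀ y, Multiplicative.toAdd (phi y qhat) = (if xq = y then (1:ℤ) else 0) :=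
    fun y => by rw [hxq, phi_conj]
  have kr : ∀ y, Multiplicative.toAdd (phi y r) = (if xr = y then (1:ℤ) else 0) :=
    fun y => by rw [hxr, phi_conj]
  have ks : ∀ y, Multiplicative.toAdd (phi y s) = (if xs = y then (1:ℤ) else 0) :=
    fun y => by rw [hxs, phi_conj]
  have key : ∀ y : X, (if xr = y then (1:ℤ) else 0)
      = (if xq = y then (1:ℤ) else 0) * N + (if xs = y then (1:ℤ) else 0) := by
    intro y
    have h1 : phi y r = (phi y qhat) ^ N * phi y s := by
      rw [hr', map_mul, map_zpow]
    have h2 : Multiplicative.toAdd ((phi y qhat) ^ N)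
        = Multiplicative.toAdd (phi y qhat) * N := by
      simp [toAdd_zpow, smul_eq_mul, mul_comm]
    have h3 := congrArg Multiplicative.toAdd h1
    rw [toAdd_mul, h2, kq, kr, ks] at h3
    exact h3
  have hN0 : N = 0 := by
    by_cases c1 : xr = xs
    · subst c1
      have e := key xq
      rw [if_pos (rfl : xq = xq)] at e
      by_cases c3 : xr = xq
      · rw [if_pos c3] at e
        omega
      · rw [if_neg c3] at e
        omega
    · by_cases c2 : xq = xs
      · subst c2
        have e1 := key xq
        rw [if_neg c1, if_pos (rfl : xq = xq)] at e1
        have e3 := key xr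
        rw [if_pos (rfl : xr = xr), if_neg (show ¬ xq = xr from fun h => c1 h.symm)] at e3
        omega
      · have e := key xs
        rw [if_neg c1, if_neg c2, if_pos (rfl : xs = xs)] at e
        omega
  rw [hN0, zpow_zero] at hN
  exact mul_inv_eq_one.mp hN

end MagnusAux

/-- Let `X` be a nonempty set and `Q ⊆ F(X)` the set of all
conjugates `w⁻¹ x w` of generators `x ∈ X` in the free group `F(X)`, with the
conjugation operation `q * r := r⁻¹ q r` (so `Q` is a subquandle of
`Conj(F(X))`, realizing the free quandle on `X`). Then `Q` admits a right
order, and `Q` is semi-latin at every point. -/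
theorem freeQuandle_rightOrderable_semiLatin
    (X : Type*) [Nonempty X]
    (Q : Set (FreeGroup X))
    (hQ : Q = {g : FreeGroup X | ∃ (x : X) (w : FreeGroup X),
      g = w⁻¹ * FreeGroup.of x * w}) :
    -- `Q` is closed under conjugation, i.e. a subquandle of `Conj(F(X))`
    (∀ q ∈ Q, ∀ r ∈ Q, r⁻¹ * q * r ∈ Q) ∧
    -- `Q` admits a right order
    (∃ lt : FreeGroup X → FreeGroup X → Prop,
      (∀ a ∈ Q, ¬ lt a a) ∧
      (∀ a ∈ Q, ∀ b ∈ Q, ∀ c ∈ Q, lt a b → lt b c → lt a c) ∧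
      (∀ a ∈ Q, ∀ b ∈ Q, a ≠ b → lt a b ∨ lt b a) ∧
      (∀ r ∈ Q, ∀ a ∈ Q, ∀ b ∈ Q, lt a b → lt (r⁻¹ * a * r) (r⁻¹ * b * r))) ∧
    -- `Q` is semi-latin at every point
    (∀ qhat ∈ Q, ∀ r ∈ Q, ∀ s ∈ Q, r⁻¹ * qhat * r = s⁻¹ * qhat * s → r = s) := by
  subst hQ
  refine ⟨?_, ?_, ?_⟩
  · rintro q ⟨x, w, rfl⟩ r _
    exact ⟨x, w * r, by group⟩
  · refine ⟨fun a b => MagnusAux.Pos (a⁻¹ * b), ?_, ?_, ?_, ?_⟩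
    · intro a _ h
      rw [inv_mul_cancel] at h
      exact MagnusAux.not_pos_one h
    · intro a _ b _ c _ h1 h2
      have h3 := MagnusAux.pos_mul h1 h2
      rw [show (a⁻¹ * b) * (b⁻¹ * c) = a⁻¹ * c by group] at h3
      exact h3
    · intro a _ b _ hne
      have hne' : a⁻¹ * b ≠ 1 := by
        intro hc
        apply hne
        have := congrArg (fun z => a * z) hc
        simpa [mul_assoc] using this.symm
      rcases MagnusAux.pos_total hne' with h | h
      · exact Or.inl h
      · right
        rw [show (a⁻¹ * b)⁻¹ = b⁻¹ * a by group] at h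
        exact h
    · intro r _ a _ b _ h
      have h2 := MagnusAux.pos_conj r h
      rw [show r⁻¹ * (a⁻¹ * b) * r = (r⁻¹ * a * r)⁻¹ * (r⁻¹ * b * r) by group] at h2
      exact h2
  · intro qhat hq r hr s hs heq
    exact MagnusAux.semilatin qhat r s hq hr hs heq
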